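/- Every deterministic learning-augmented online caching algorithm has competitive ratio at least 1 + Ω(min((1/k)·(η/OPT), k)); i.e., for every deterministic algorithm A, every k ≥ 2, and every value r ∈ [0, k], there exist inputs (σ, h) with η/(k·OPT) arbitrarily close to r and OPT arbitrarily large such that ALG_A(σ,h) ≥ OPT(σ) + C·η(σ,h)/k for a universal constant C > 0. -/

import Mathlib

/-- The history (most recent first) of (request, prediction) pairs before time t. -/
def hist (σ h : ℕ → ℕ) (t : ℕ) : List (ℕ × ℕ) :=
  ((List.range t).map (fun i => (σ i, h i))).reverse

/-- A deterministic learning-augmented caching algorithm with cache size k,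
given by the (page-level) cache contents it holds after any history. -/
def DetAlgorithm (k : ℕ) (Alg : List (ℕ × ℕ) → Finset ℕ) : Prop :=
  Alg [] = ∅ ∧ (∀ l, (Alg l).card ≤ k) ∧
    ∀ (pr : ℕ × ℕ) (l : List (ℕ × ℕ)),
      pr.1 ∈ Alg (pr :: l) ∧ Alg (pr :: l) ⊆ insert pr.1 (Alg l)

/-- The algorithm's eviction cost on the first n requests of (σ, h). -/
def algCost (Alg : List (ℕ × ℕ) → Finset ℕ) (σ h : ℕ → ℕ) (n : ℕ) : ℕ :=
  ∑ t ∈ Finset.range n, (Alg (hist σ h t) \ Alg (hist σ h (t + 1))).card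

/-- A valid offline schedule for σ on a size-k cache. -/
def IsSchedule (k n : ℕ) (σ : ℕ → ℕ) (C : ℕ → Finset ℕ) : Prop :=
  C 0 = ∅ ∧ (∀ t, (C t).card ≤ k) ∧
    ∀ t < n, σ t ∈ C (t + 1) ∧ C (t + 1) ⊆ insert (σ t) (C t)

/-- Eviction cost of a schedule. -/
def schedCost (n : ℕ) (σ : ℕ → ℕ) (C : ℕ → Finset ℕ) : ℕ :=
  ∑ t ∈ Finset.range n, (C t \ C (t + 1)).card

/-- Offline optimal eviction cost. -/
noncomputable def optCost (k n : ℕ) (σ : ℕ → ℕ) : ℕ :=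
  sInf {c : ℕ | ∃ C : ℕ → Finset ℕ, IsSchedule k n σ C ∧ schedCost n σ C = c}

/-- ℓ1 prediction error. -/
def l1Error (n : ℕ) (h y : ℕ → ℕ) : ℕ :=
  ∑ t ∈ Finset.range n, ((h t : ℤ) - (y t : ℤ)).natAbs

open Finset
open scoped Classical

namespace DLB

lemma hist_zero (σ h : ℕ → ℕ) : hist σ h 0 = [] := by simp [hist]

lemma hist_succ (σ h : ℕ → ℕ) (t : ℕ) :
    hist σ h (t + 1) = (σ t, h t) :: hist σ h t := by
  simp [hist, List.range_succ]

lemma hist_congr (σ h h' : ℕ → ℕ) (t : ℕ) (hh : ∀ i < t, h i = h' i) :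
    hist σ h t = hist σ h' t := by
  unfold hist
  congr 1
  apply List.map_congr_left
  intro i hi
  rw [List.mem_range] at hi
  rw [hh i hi]

lemma algSchedule {k : ℕ} {Alg : List (ℕ × ℕ) → Finset ℕ} (hAlg : DetAlgorithm k Alg)
    (σ h : ℕ → ℕ) (n : ℕ) : IsSchedule k n σ (fun t => Alg (hist σ h t)) := by
  refine ⟨by simp [hist_zero, hAlg.1], fun t => hAlg.2.1 _, fun t ht => ?_⟩
  have := hAlg.2.2 (σ t, h t) (hist σ h t)
  simp only [hist_succ]
  exact this

lemma algCost_eq (Alg : List (ℕ × ℕ) → Finset ℕ) (σ h : ℕ → ℕ) (n : ℕ) :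
    schedCost n σ (fun t => Alg (hist σ h t)) = algCost Alg σ h n := rfl

lemma cache_subset_past (σ : ℕ → ℕ) (C : ℕ → Finset ℕ) (n : ℕ) (hC0 : C 0 = ∅)
    (hstep : ∀ t < n, C (t + 1) ⊆ insert (σ t) (C t)) :
    ∀ t, t ≤ n → ∀ p ∈ C t, ∃ s < t, σ s = p := by
  intro t
  induction t with
  | zero => intro _ p hp; rw [hC0] at hp; exact absurd hp (Finset.notMem_empty p)
  | succ t ih =>
    intro htn p hp
    have hsub := hstep t (by omega)
    rcases Finset.mem_insert.mp (hsub hp) with h | h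
    · exact ⟨t, Nat.lt_succ_self t, h.symm⟩
    · obtain ⟨s, hs, rfl⟩ := ih (by omega) p h
      exact ⟨s, by omega, rfl⟩

lemma card_step {C₁ C₂ : Finset ℕ} {p : ℕ} (h1 : p ∈ C₂) (h2 : C₂ ⊆ insert p C₁) :
    C₁.card + (if p ∈ C₁ then 0 else 1) ≤ (C₁ \ C₂).card + C₂.card := by
  by_cases hp : p ∈ C₁
  · simp only [hp, if_true, add_zero]
    have hsub : C₁ ⊆ (C₁ \ C₂) ∪ C₂ := by
      intro x hx
      by_cases hx2 : x ∈ C₂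
      · exact Finset.mem_union_right _ hx2
      · exact Finset.mem_union_left _ (Finset.mem_sdiff.mpr ⟨hx, hx2⟩)
    calc C₁.card ≤ ((C₁ \ C₂) ∪ C₂).card := Finset.card_le_card hsub
      _ ≤ _ := Finset.card_union_le _ _
  · simp only [hp, if_false]
    have hsub : insert p C₁ ⊆ (C₁ \ C₂) ∪ C₂ := by
      intro x hx
      rcases Finset.mem_insert.mp hx with rfl | hx1
      · exact Finset.mem_union_right _ h1
      · by_cases hx2 : x ∈ C₂
        · exact Finset.mem_union_right _ hx2
        · exact Finset.mem_union_left _ (Finset.mem_sdiff.mpr ⟨hx1, hx2⟩)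
    calc C₁.card + 1 = (insert p C₁).card := (Finset.card_insert_of_notMem hp).symm
      _ ≤ ((C₁ \ C₂) ∪ C₂).card := Finset.card_le_card hsub
      _ ≤ _ := Finset.card_union_le _ _

lemma miss_le_cost (σ : ℕ → ℕ) (C : ℕ → Finset ℕ) (n : ℕ)
    (hstep : ∀ t < n, σ t ∈ C (t + 1) ∧ C (t + 1) ⊆ insert (σ t) (C t)) :
    ((Finset.range n).filter (fun t => σ t ∉ C t)).card ≤ schedCost n σ C + (C n).card := by
  induction n with
  | zero => simp [schedCost]
  | succ n ih =>
    have ih' := ih (fun t ht => hstep t (by omega))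
    have hstepn := hstep n (by omega)
    have hkey := card_step hstepn.1 hstepn.2
    have hcost : schedCost (n + 1) σ C = schedCost n σ C + (C n \ C (n + 1)).card := by
      simp [schedCost, Finset.sum_range_succ]
    rw [Finset.range_add_one, Finset.filter_insert]
    by_cases hm : σ n ∈ C n
    · rw [if_neg (by simp [hm])]
      rw [if_pos hm] at hkey
      omega
    · rw [if_pos (by simp [hm]), Finset.card_insert_of_notMem (by simp)]
      rw [if_neg hm] at hkey
      omega

end DLB

namespace DLB

/-! ### The adversarial construction -/

/-- Least page `≤ k` not in the algorithm's cache. -/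
noncomputable def dodge (k : ℕ) (Alg : List (ℕ × ℕ) → Finset ℕ) (l : List (ℕ × ℕ)) : ℕ :=
  sInf {p | p ≤ k ∧ p ∉ Alg l}

lemma dodge_spec {k : ℕ} {Alg : List (ℕ × ℕ) → Finset ℕ} (hAlg : DetAlgorithm k Alg)
    (l : List (ℕ × ℕ)) : dodge k Alg l ≤ k ∧ dodge k Alg l ∉ Alg l := by
  have hne : {p | p ≤ k ∧ p ∉ Alg l}.Nonempty := by
    rw [Set.nonempty_iff_ne_empty]
    intro hemp
    have hemp' : ∀ p, ¬ (p ≤ k ∧ p ∉ Alg l) := fun p hp => by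
      have : p ∈ ({p | p ≤ k ∧ p ∉ Alg l} : Set ℕ) := hp
      rw [hemp] at this; exact this
    have hsub : Finset.range (k + 1) ⊆ Alg l := by
      intro p hp
      rw [Finset.mem_range] at hp
      by_contra hpA
      exact hemp' p ⟨by omega, hpA⟩
    have := Finset.card_le_card hsub
    rw [Finset.card_range] at this
    have := hAlg.2.1 l
    omega
  exact Nat.sInf_mem hne

/-- predictions fed to the algorithm -/
def h0 (M n : ℕ) (t : ℕ) : ℕ := if t < M then n + 1 else t

/-- history list (newest first) of the adversarial run -/
noncomputable def advL (k M n : ℕ) (Alg : List (ℕ × ℕ) → Finset ℕ) : ℕ → List (ℕ × ℕ)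
  | 0 => []
  | t + 1 =>
      ((if t < M then t + k + 1
        else if (t - M) % 3 = 0 then ((t - M) / 3) % (k + 1)
        else dodge k Alg (advL k M n Alg t)),
       (if t < M then n + 1 else t)) :: advL k M n Alg t

/-- the adversarial request sequence -/
noncomputable def sig (k M n : ℕ) (Alg : List (ℕ × ℕ) → Finset ℕ) (t : ℕ) : ℕ :=
  if t < M then t + k + 1
  else if (t - M) % 3 = 0 then ((t - M) / 3) % (k + 1)
  else dodge k Alg (advL k M n Alg t)

lemma advL_succ (k M n : ℕ) (Alg : List (ℕ × ℕ) → Finset ℕ) (t : ℕ) :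
    advL k M n Alg (t + 1) = (sig k M n Alg t, h0 M n t) :: advL k M n Alg t := rfl

lemma hist_advL (k M n : ℕ) (Alg : List (ℕ × ℕ) → Finset ℕ) :
    ∀ t, hist (sig k M n Alg) (h0 M n) t = advL k M n Alg t := by
  intro t
  induction t with
  | zero => rw [hist_zero]; rfl
  | succ t ih => rw [hist_succ, advL_succ, ih]

lemma sig_calm {k M n : ℕ} {Alg : List (ℕ × ℕ) → Finset ℕ} {t : ℕ} (ht : t < M) :
    sig k M n Alg t = t + k + 1 := if_pos ht

lemma sig_sweep {k M n : ℕ} {Alg : List (ℕ × ℕ) → Finset ℕ} {t : ℕ} (ht : M ≤ t)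
    (h3 : (t - M) % 3 = 0) :
    sig k M n Alg t = ((t - M) / 3) % (k + 1) := by
  rw [sig, if_neg (by omega), if_pos h3]

lemma sig_dodge {k M n : ℕ} {Alg : List (ℕ × ℕ) → Finset ℕ} {t : ℕ} (ht : M ≤ t)
    (h3 : (t - M) % 3 ≠ 0) :
    sig k M n Alg t = dodge k Alg (advL k M n Alg t) := by
  rw [sig, if_neg (by omega), if_neg h3]

lemma sig_adv_le {k M n : ℕ} {Alg : List (ℕ × ℕ) → Finset ℕ} (hAlg : DetAlgorithm k Alg)
    {t : ℕ} (ht : M ≤ t) : sig k M n Alg t ≤ k := by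
  by_cases h3 : (t - M) % 3 = 0
  · rw [sig_sweep ht h3]
    have := Nat.mod_lt ((t - M) / 3) (show 0 < k + 1 by omega)
    omega
  · rw [sig_dodge ht h3]
    exact (dodge_spec hAlg _).1

/-- the true next-arrival function -/
noncomputable def yf (n : ℕ) (σ : ℕ → ℕ) (t : ℕ) : ℕ :=
  sInf {t' | (t < t' ∧ t' < n ∧ σ t' = σ t) ∨ t' = n + 1}

lemma yf_isLeast (n : ℕ) (σ : ℕ → ℕ) (t : ℕ) :
    IsLeast {t' | (t < t' ∧ t' < n ∧ σ t' = σ t) ∨ t' = n + 1} (yf n σ t) :=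
  ⟨Nat.sInf_mem ⟨n + 1, Or.inr rfl⟩, fun _ hb => Nat.sInf_le hb⟩

lemma yf_calm {k M T : ℕ} {Alg : List (ℕ × ℕ) → Finset ℕ} (hAlg : DetAlgorithm k Alg)
    {t : ℕ} (ht : t < M) :
    yf (M + T) (sig k M (M + T) Alg) t = M + T + 1 := by
  have hmem := (yf_isLeast (M + T) (sig k M (M + T) Alg) t).1
  rcases hmem with ⟨h1, h2, h3⟩ | h
  · exfalso
    set t' := yf (M + T) (sig k M (M + T) Alg) t with ht'
    by_cases hc : t' < M
    · rw [sig_calm hc, sig_calm ht] at h3; omega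
    · have := sig_adv_le (M := M) (n := M + T) hAlg (t := t') (by omega)
      rw [h3, sig_calm ht] at this; omega
  · exact h

lemma yf_adv {k M T : ℕ} {Alg : List (ℕ × ℕ) → Finset ℕ} (hAlg : DetAlgorithm k Alg)
    {t : ℕ} (ht : M ≤ t) (htn : t < M + T) :
    t < yf (M + T) (sig k M (M + T) Alg) t ∧
      yf (M + T) (sig k M (M + T) Alg) t ≤ t + (6 * k + 4) := by
  set n := M + T with hn
  set σ := sig k M n Alg with hσ
  set p := σ t with hp
  have hpk : p ≤ k := sig_adv_le hAlg ht
  set s := t - M with hs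
  set a := s / 3 with ha
  set s' := 3 * ((a / (k + 1) + 1) * (k + 1) + p) with hs'
  -- σ (M + s') = p
  have hocc : σ (M + s') = p := by
    have h3 : (M + s' - M) % 3 = 0 := by
      simp only [Nat.add_sub_cancel_left, hs']
      omega
    have hM : M ≤ M + s' := by omega
    rw [hσ, sig_sweep hM h3]
    have hdiv : (M + s' - M) / 3 = (a / (k + 1) + 1) * (k + 1) + p := by
      simp only [Nat.add_sub_cancel_left, hs']
      omega
    rw [hdiv, Nat.add_comm, Nat.add_mul_mod_self_right]
    exact Nat.mod_eq_of_lt (by omega)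
  -- s < s'
  have hlt : s < s' := by
    have h1 : a < (a / (k + 1) + 1) * (k + 1) := by
      have h2 := Nat.div_add_mod a (k + 1)
      have h3 := Nat.mod_lt a (show 0 < k + 1 by omega)
      calc a = (k + 1) * (a / (k + 1)) + a % (k + 1) := (Nat.div_add_mod a (k + 1)).symm
        _ < (k + 1) * (a / (k + 1)) + (k + 1) := by omega
        _ = (a / (k + 1) + 1) * (k + 1) := by ring
    have h4 := Nat.div_add_mod s 3
    have h5 : 3 * a ≤ s := by omega
    omega
  -- s' ≤ s + 6k + 3
  have hle : s' ≤ s + (6 * k + 3) := by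
    have h1 : (a / (k + 1)) * (k + 1) ≤ a := Nat.div_mul_le_self a (k + 1)
    have h2 : 3 * a ≤ s := by
      have := Nat.div_add_mod s 3; omega
    have : s' = 3 * ((a / (k + 1)) * (k + 1)) + 3 * (k + 1) + 3 * p := by rw [hs']; ring
    omega
  constructor
  · have hmem := (yf_isLeast n σ t).1
    rcases hmem with ⟨h1, _, _⟩ | h
    · exact h1
    · omega
  · by_cases hcase : M + s' < n
    · have : yf n σ t ≤ M + s' :=
        Nat.sInf_le (Or.inl ⟨by omega, hcase, hocc⟩)
      omega
    · have : yf n σ t ≤ n + 1 := Nat.sInf_le (Or.inr rfl)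
      omega

end DLB

namespace DLB

lemma sched_miss_calm {k M T : ℕ} {Alg : List (ℕ × ℕ) → Finset ℕ}
    {C : ℕ → Finset ℕ} (hC : IsSchedule k (M + T) (sig k M (M + T) Alg) C)
    {t : ℕ} (ht : t < M) : sig k M (M + T) Alg t ∉ C t := by
  intro hmem
  obtain ⟨s, hs, hseq⟩ := cache_subset_past (sig k M (M + T) Alg) C (M + T) hC.1
    (fun u hu => (hC.2.2 u hu).2) t (by omega) _ hmem
  rw [sig_calm (show s < M by omega), sig_calm ht] at hseq
  omega

lemma opt_lower {k M T : ℕ} {Alg : List (ℕ × ℕ) → Finset ℕ} (hAlg : DetAlgorithm k Alg) :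
    M ≤ optCost k (M + T) (sig k M (M + T) Alg) + k := by
  set n := M + T with hn
  set σ := sig k M n Alg with hσ
  have hne : {c : ℕ | ∃ C : ℕ → Finset ℕ, IsSchedule k n σ C ∧ schedCost n σ C = c}.Nonempty :=
    ⟨_, ⟨_, algSchedule hAlg σ (h0 M n) n, rfl⟩⟩
  obtain ⟨C, hC, hcost⟩ := Nat.sInf_mem hne
  have hsub : Finset.range M ⊆ (Finset.range n).filter (fun t => σ t ∉ C t) := by
    intro t ht
    rw [Finset.mem_range] at ht
    rw [Finset.mem_filter, Finset.mem_range]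
    exact ⟨by omega, sched_miss_calm hC ht⟩
  have h1 := Finset.card_le_card hsub
  rw [Finset.card_range] at h1
  have h2 := miss_le_cost σ C n hC.2.2
  have h3 := hC.2.1 n
  rw [optCost]
  omega

lemma dodge_miss {k M T : ℕ} {Alg : List (ℕ × ℕ) → Finset ℕ} (hAlg : DetAlgorithm k Alg)
    {h : ℕ → ℕ} (hh : ∀ i, i < M + T - 1 → h i = h0 M (M + T) i)
    {t : ℕ} (ht : M ≤ t) (htn : t < M + T) (h3 : (t - M) % 3 ≠ 0) :
    sig k M (M + T) Alg t ∉ Alg (hist (sig k M (M + T) Alg) h t) := by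
  have hhist : hist (sig k M (M + T) Alg) h t = advL k M (M + T) Alg t := by
    rw [hist_congr _ h (h0 M (M + T)) t (fun i hi => hh i (by omega)), hist_advL]
  rw [hhist, sig_dodge ht h3]
  exact (dodge_spec hAlg _).2

lemma sweep_count {M T : ℕ} :
    (((Finset.Ico M (M + T)).filter (fun t => (t - M) % 3 = 0)).card) ≤ T / 3 + 1 := by
  have := Finset.card_le_card_of_injOn (fun t => (t - M) / 3)
    (s := (Finset.Ico M (M + T)).filter (fun t => (t - M) % 3 = 0))
    (t := Finset.range (T / 3 + 1))
    (by
      intro t htm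
      rw [Finset.mem_coe, Finset.mem_filter, Finset.mem_Ico] at htm
      simp only [Finset.mem_coe, Finset.mem_range]
      have h1 : t - M ≤ T := by omega
      have h2 := Nat.div_le_div_right (c := 3) h1
      omega)
    (by
      intro a ha b hb hab
      rw [Finset.mem_coe, Finset.mem_filter, Finset.mem_Ico] at ha hb
      simp only at hab
      have h1 := Nat.div_add_mod (a - M) 3
      have h2 := Nat.div_add_mod (b - M) 3
      omega)
  rw [Finset.card_range] at this
  exact this

lemma alg_lower {k M T : ℕ} {Alg : List (ℕ × ℕ) → Finset ℕ} (hAlg : DetAlgorithm k Alg)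
    {h : ℕ → ℕ} (hh : ∀ i, i < M + T - 1 → h i = h0 M (M + T) i) :
    M + T ≤ algCost Alg (sig k M (M + T) Alg) h (M + T) + k + (T / 3 + 1) := by
  set n := M + T with hn
  set σ := sig k M n Alg with hσ
  set C := fun t => Alg (hist σ h t) with hCdef
  have hC : IsSchedule k n σ C := algSchedule hAlg σ h n
  set dodges := (Finset.Ico M n).filter (fun t => ¬ (t - M) % 3 = 0) with hdodges
  set sweeps := (Finset.Ico M n).filter (fun t => (t - M) % 3 = 0) with hsweeps
  have hsplit : sweeps.card + dodges.card = T := by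
    rw [hsweeps, hdodges, Finset.card_filter_add_card_filter_not]
    rw [Nat.card_Ico]; omega
  have hsweep_le : sweeps.card ≤ T / 3 + 1 := sweep_count
  have hsub : Finset.range M ∪ dodges ⊆ (Finset.range n).filter (fun t => σ t ∉ C t) := by
    intro t htm
    rw [Finset.mem_filter, Finset.mem_range]
    rcases Finset.mem_union.mp htm with h1 | h1
    · rw [Finset.mem_range] at h1
      exact ⟨by omega, sched_miss_calm hC h1⟩
    · rw [hdodges, Finset.mem_filter, Finset.mem_Ico] at h1
      exact ⟨by omega, dodge_miss hAlg hh h1.1.1 h1.1.2 h1.2⟩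
  have hdisj : Disjoint (Finset.range M) dodges := by
    rw [Finset.disjoint_left]
    intro t ht htd
    rw [Finset.mem_range] at ht
    rw [hdodges, Finset.mem_filter, Finset.mem_Ico] at htd
    omega
  have hcard : M + dodges.card ≤ ((Finset.range n).filter (fun t => σ t ∉ C t)).card := by
    have := Finset.card_le_card hsub
    rw [Finset.card_union_of_disjoint hdisj, Finset.card_range] at this
    exact this
  have h2 := miss_le_cost σ C n hC.2.2
  have h3 : (C n).card ≤ k := hAlg.2.1 _
  have h4 : schedCost n σ C = algCost Alg σ h n := rfl
  omega

lemma opt_le_alg {k n : ℕ} {Alg : List (ℕ × ℕ) → Finset ℕ} (hAlg : DetAlgorithm k Alg)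
    (σ h : ℕ → ℕ) : optCost k n σ ≤ algCost Alg σ h n :=
  Nat.sInf_le ⟨_, algSchedule hAlg σ h n, rfl⟩

end DLB

namespace DLB

/-! ### The cheap offline schedule -/

noncomputable def pickm (k M n : ℕ) (Alg : List (ℕ × ℕ) → Finset ℕ) (t : ℕ) : ℕ :=
  sInf {p | p ≤ k ∧ ∀ s, t ≤ s → s < t + k → sig k M n Alg s ≠ p}

lemma pickm_spec {k : ℕ} (M n : ℕ) (Alg : List (ℕ × ℕ) → Finset ℕ) (t : ℕ) (hk : 1 ≤ k) :
    pickm k M n Alg t ≤ k ∧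
      ∀ s, t ≤ s → s < t + k → sig k M n Alg s ≠ pickm k M n Alg t := by
  have hne : {p | p ≤ k ∧ ∀ s, t ≤ s → s < t + k → sig k M n Alg s ≠ p}.Nonempty := by
    rw [Set.nonempty_iff_ne_empty]
    intro hemp
    have hemp' : ∀ p, p ≤ k → ∃ s, t ≤ s ∧ s < t + k ∧ sig k M n Alg s = p := by
      intro p hp
      by_contra hc
      push_neg at hc
      have hmem : p ∈ ({p | p ≤ k ∧ ∀ s, t ≤ s → s < t + k → sig k M n Alg s ≠ p} : Set ℕ) :=
        ⟨hp, fun s hs1 hs2 => hc s hs1 hs2⟩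
      rw [hemp] at hmem
      exact hmem
    have hsub : Finset.range (k + 1) ⊆ (Finset.Ico t (t + k)).image (sig k M n Alg) := by
      intro p hp
      rw [Finset.mem_range] at hp
      obtain ⟨s, hs1, hs2, hs3⟩ := hemp' p (by omega)
      exact Finset.mem_image.mpr ⟨s, Finset.mem_Ico.mpr ⟨hs1, hs2⟩, hs3⟩
    have h1 := Finset.card_le_card hsub
    have h2 := Finset.card_image_le (s := Finset.Ico t (t + k)) (f := sig k M n Alg)
    rw [Finset.card_range] at h1
    rw [Nat.card_Ico] at h2
    omega
  exact Nat.sInf_mem hne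

noncomputable def mfun (k M n : ℕ) (Alg : List (ℕ × ℕ) → Finset ℕ) : ℕ → ℕ
  | 0 => 0
  | t + 1 => if M ≤ t ∧ sig k M n Alg t = mfun k M n Alg t
      then pickm k M n Alg t else mfun k M n Alg t

lemma mfun_le {k : ℕ} (M n : ℕ) (Alg : List (ℕ × ℕ) → Finset ℕ) (hk : 1 ≤ k) :
    ∀ t, mfun k M n Alg t ≤ k := by
  intro t
  induction t with
  | zero => simp [mfun]
  | succ t ih =>
    rw [mfun]
    split
    · exact (pickm_spec M n Alg t hk).1
    · exact ih

lemma mfun_persist {k M n : ℕ} {Alg : List (ℕ × ℕ) → Finset ℕ} (hk : 1 ≤ k) {t : ℕ}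
    (hM : M ≤ t) (hhit : sig k M n Alg t = mfun k M n Alg t) :
    ∀ j, 1 ≤ j → j ≤ k → mfun k M n Alg (t + j) = pickm k M n Alg t := by
  intro j
  induction j with
  | zero => omega
  | succ j ih =>
    intro _ hjk
    by_cases hj : j = 0
    · subst hj
      show mfun k M n Alg (t + 1) = _
      rw [mfun, if_pos ⟨hM, hhit⟩]
    · have hjm := ih (by omega) (by omega)
      have : t + (j + 1) = (t + j) + 1 := by omega
      rw [this, mfun, if_neg, hjm]
      intro ⟨_, habs⟩
      rw [hjm] at habs
      exact (pickm_spec M n Alg t hk).2 (t + j) (by omega) (by omega) habs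

lemma hits_spaced {k M n : ℕ} {Alg : List (ℕ × ℕ) → Finset ℕ} (hk : 1 ≤ k) {t t' : ℕ}
    (hM : M ≤ t) (ht : t < t')
    (hhit : sig k M n Alg t = mfun k M n Alg t)
    (hhit' : sig k M n Alg t' = mfun k M n Alg t') : t + k ≤ t' := by
  by_contra hc
  push_neg at hc
  have hj := mfun_persist hk hM hhit (t' - t) (by omega) (by omega)
  rw [show t + (t' - t) = t' by omega] at hj
  rw [hj] at hhit'
  exact (pickm_spec M n Alg t hk).2 t' (by omega) (by omega) hhit'

lemma hits_card {k M T n : ℕ} {Alg : List (ℕ × ℕ) → Finset ℕ} (hk : 1 ≤ k) :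
    (((Finset.Ico M (M + T)).filter
        (fun t => sig k M n Alg t = mfun k M n Alg t)).card) ≤ T / k + 1 := by
  have := Finset.card_le_card_of_injOn (fun t => (t - M) / k)
    (s := (Finset.Ico M (M + T)).filter (fun t => sig k M n Alg t = mfun k M n Alg t))
    (t := Finset.range (T / k + 1))
    (by
      intro t htm
      rw [Finset.mem_coe, Finset.mem_filter, Finset.mem_Ico] at htm
      simp only [Finset.mem_coe, Finset.mem_range]
      have h1 : t - M ≤ T := by omega
      have h2 := Nat.div_le_div_right (c := k) h1
      omega)
    (by
      intro a ha b hb hab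
      rw [Finset.mem_coe, Finset.mem_filter, Finset.mem_Ico] at ha hb
      simp only at hab
      rcases Nat.lt_trichotomy a b with hlt | heq | hlt
      · exfalso
        have hsp := hits_spaced hk ha.1.1 hlt ha.2 hb.2
        have : (a - M) / k + 1 ≤ (b - M) / k := by
          have : (a - M) + k ≤ b - M := by omega
          have h5 := Nat.div_le_div_right (c := k) this
          rw [Nat.add_div_right _ (by omega)] at h5
          omega
        omega
      · exact heq
      · exfalso
        have hsp := hits_spaced hk hb.1.1 hlt hb.2 ha.2
        have : (b - M) / k + 1 ≤ (a - M) / k := by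
          have : (b - M) + k ≤ a - M := by omega
          have h5 := Nat.div_le_div_right (c := k) this
          rw [Nat.add_div_right _ (by omega)] at h5
          omega
        omega)
  rw [Finset.card_range] at this
  exact this

noncomputable def Copt (k M n : ℕ) (Alg : List (ℕ × ℕ) → Finset ℕ) (t : ℕ) : Finset ℕ :=
  if t = 0 then ∅
  else if t ≤ M then {sig k M n Alg (t - 1)}
  else ((Finset.Ico M t).image (sig k M n Alg)).erase (mfun k M n Alg t)

lemma Copt_adv_def {k M n : ℕ} {Alg : List (ℕ × ℕ) → Finset ℕ} {t : ℕ} (ht : M < t) :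
    Copt k M n Alg t = ((Finset.Ico M t).image (sig k M n Alg)).erase (mfun k M n Alg t) := by
  rw [Copt, if_neg (by omega), if_neg (by omega)]

lemma Copt_card {k M n : ℕ} {Alg : List (ℕ × ℕ) → Finset ℕ} (hAlg : DetAlgorithm k Alg)
    (hk : 1 ≤ k) : ∀ t, (Copt k M n Alg t).card ≤ k := by
  intro t
  rw [Copt]
  split
  · simp
  · split
    · simp [hk]
    · rename_i h1 h2
      set S := (Finset.Ico M t).image (sig k M n Alg) with hS
      have hsub : S ⊆ Finset.range (k + 1) := by
        intro x hx
        rw [hS, Finset.mem_image] at hx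
        obtain ⟨s, hs, rfl⟩ := hx
        rw [Finset.mem_Ico] at hs
        rw [Finset.mem_range]
        have := sig_adv_le (M := M) (n := n) hAlg hs.1
        omega
      have hm := mfun_le M n Alg hk t
      by_cases hmem : mfun k M n Alg t ∈ S
      · rw [Finset.card_erase_of_mem hmem]
        have := Finset.card_le_card hsub
        rw [Finset.card_range] at this
        omega
      · rw [Finset.erase_eq_of_notMem hmem]
        by_contra hc
        push_neg at hc
        have hcard : (Finset.range (k + 1)).card ≤ S.card := by
          rw [Finset.card_range]; omega
        have := Finset.eq_of_subset_of_card_le hsub hcard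
        rw [this] at hmem
        exact hmem (Finset.mem_range.mpr (by omega))

lemma mfun_ne_sig {k M n : ℕ} {Alg : List (ℕ × ℕ) → Finset ℕ} (hk : 1 ≤ k) {t : ℕ}
    (ht : M ≤ t) : sig k M n Alg t ≠ mfun k M n Alg (t + 1) := by
  rw [mfun]
  split
  · rename_i hcond
    intro habs
    exact (pickm_spec M n Alg t hk).2 t (le_refl t) (by omega) habs
  · rename_i hcond
    intro habs
    exact hcond ⟨ht, habs⟩

lemma Copt_schedule {k M T : ℕ} {Alg : List (ℕ × ℕ) → Finset ℕ} (hAlg : DetAlgorithm k Alg)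
    (hk : 1 ≤ k) (hM : 1 ≤ M) :
    IsSchedule k (M + T) (sig k M (M + T) Alg) (Copt k M (M + T) Alg) := by
  set n := M + T with hn
  set σ := sig k M n Alg with hσ
  refine ⟨by rw [Copt]; simp, Copt_card hAlg hk, fun t htn => ?_⟩
  by_cases htM : t < M
  · have hC1 : Copt k M n Alg (t + 1) = {σ t} := by
      rw [Copt, if_neg (by omega), if_pos (by omega)]
      simp
      rfl
    rw [hC1]
    exact ⟨Finset.mem_singleton_self _, by
      intro x hx
      rw [Finset.mem_singleton] at hx
      subst hx
      exact Finset.mem_insert_self _ _⟩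
  · push_neg at htM
    have hC1 := Copt_adv_def (k := k) (M := M) (n := n) (Alg := Alg) (t := t + 1) (by omega)
    constructor
    · rw [hC1]
      refine Finset.mem_erase.mpr ⟨mfun_ne_sig hk htM, ?_⟩
      exact Finset.mem_image.mpr ⟨t, Finset.mem_Ico.mpr ⟨htM, by omega⟩, rfl⟩
    · rw [hC1]
      intro x hx
      rw [Finset.mem_erase, Finset.mem_image] at hx
      obtain ⟨hxne, s, hs, hxeq⟩ := hx
      rw [Finset.mem_Ico] at hs
      by_cases hxt : x = σ t
      · rw [hxt]; exact Finset.mem_insert_self _ _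
      · have hst : s < t := by
          rcases Nat.lt_or_ge s t with h | h
          · exact h
          · exfalso; have : s = t := by omega
            rw [this] at hxeq; exact hxt hxeq.symm
        have htM' : M < t := by
          rcases Nat.lt_or_ge M t with h | h
          · exact h
          · exfalso; have : t = M := by omega
            omega
        apply Finset.mem_insert_of_mem
        rw [Copt_adv_def htM']
        refine Finset.mem_erase.mpr ⟨?_, Finset.mem_image.mpr ⟨s, Finset.mem_Ico.mpr ⟨hs.1, hst⟩, hxeq⟩⟩
        intro habs
        have hmf : mfun k M n Alg (t + 1) = mfun k M n Alg t := by
          rw [mfun]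
          split
          · rename_i hcond
            exfalso
            exact hxt (by show x = sig k M n Alg t; rw [hcond.2]; exact habs)
          · rfl
        rw [← hmf] at habs
        exact hxne habs

lemma Copt_cost {k M T : ℕ} {Alg : List (ℕ × ℕ) → Finset ℕ} (hAlg : DetAlgorithm k Alg)
    (hk : 1 ≤ k) (hM : 1 ≤ M) :
    schedCost (M + T) (sig k M (M + T) Alg) (Copt k M (M + T) Alg) ≤ M + (T / k + 1) := by
  set n := M + T with hn
  set σ := sig k M n Alg with hσ
  have hpoint : ∀ t < n, (Copt k M n Alg t \ Copt k M n Alg (t + 1)).card ≤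
      (if 1 ≤ t ∧ t ≤ M then 1 else 0) +
      (if M < t ∧ σ t = mfun k M n Alg t then 1 else 0) := by
    intro t htn
    by_cases ht0 : t = 0
    · subst ht0
      rw [Copt]
      simp
    · by_cases htM : t ≤ M
      · rw [if_pos ⟨by omega, htM⟩]
        have : Copt k M n Alg t = {σ (t - 1)} := by
          rw [Copt, if_neg ht0, if_pos htM]
        calc (Copt k M n Alg t \ Copt k M n Alg (t + 1)).card
            ≤ (Copt k M n Alg t).card := Finset.card_le_card (Finset.sdiff_subset)
          _ ≤ 1 + _ := by rw [this]; simp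
      · push_neg at htM
        rw [if_neg (by omega)]
        by_cases hhit : σ t = mfun k M n Alg t
        · rw [if_pos ⟨htM, hhit⟩]
          have hsub : Copt k M n Alg t \ Copt k M n Alg (t + 1) ⊆ {mfun k M n Alg (t + 1)} := by
            intro x hx
            rw [Finset.mem_sdiff] at hx
            obtain ⟨hx1, hx2⟩ := hx
            rw [Copt_adv_def htM, Finset.mem_erase, Finset.mem_image] at hx1
            obtain ⟨hxne, s, hs, hxeq⟩ := hx1
            rw [Finset.mem_Ico] at hs
            rw [Copt_adv_def (show M < t + 1 by omega)] at hx2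
            rw [Finset.mem_singleton]
            by_contra hne
            apply hx2
            refine Finset.mem_erase.mpr ⟨hne, Finset.mem_image.mpr
              ⟨s, Finset.mem_Ico.mpr ⟨hs.1, by omega⟩, hxeq⟩⟩
          calc _ ≤ ({mfun k M n Alg (t + 1)} : Finset ℕ).card := Finset.card_le_card hsub
            _ = 1 := Finset.card_singleton _
          -- done
        · rw [if_neg (fun habs => hhit habs.2)]
          have hmf : mfun k M n Alg (t + 1) = mfun k M n Alg t := by
            rw [mfun, if_neg (fun habs => hhit habs.2)]
          have hsub : Copt k M n Alg t \ Copt k M n Alg (t + 1) = ∅ := by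
            rw [Finset.eq_empty_iff_forall_notMem]
            intro x hx
            rw [Finset.mem_sdiff] at hx
            obtain ⟨hx1, hx2⟩ := hx
            rw [Copt_adv_def htM, Finset.mem_erase, Finset.mem_image] at hx1
            obtain ⟨hxne, s, hs, hxeq⟩ := hx1
            rw [Finset.mem_Ico] at hs
            apply hx2
            rw [Copt_adv_def (show M < t + 1 by omega), hmf]
            exact Finset.mem_erase.mpr ⟨hxne, Finset.mem_image.mpr
              ⟨s, Finset.mem_Ico.mpr ⟨hs.1, by omega⟩, hxeq⟩⟩
          rw [hsub]
          simp
  have hsum : schedCost n σ (Copt k M n Alg) ≤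
      (∑ t ∈ Finset.range n, (if 1 ≤ t ∧ t ≤ M then 1 else 0)) +
      (∑ t ∈ Finset.range n, (if M < t ∧ σ t = mfun k M n Alg t then 1 else 0)) := by
    rw [schedCost, ← Finset.sum_add_distrib]
    apply Finset.sum_le_sum
    intro t ht
    exact hpoint t (Finset.mem_range.mp ht)
  have h1 : (∑ t ∈ Finset.range n, (if 1 ≤ t ∧ t ≤ M then 1 else 0)) ≤ M := by
    rw [← Finset.card_filter]
    calc ((Finset.range n).filter (fun t => 1 ≤ t ∧ t ≤ M)).card
        ≤ (Finset.Icc 1 M).card := by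
          apply Finset.card_le_card
          intro t ht
          rw [Finset.mem_filter] at ht
          rw [Finset.mem_Icc]
          exact ht.2
      _ = M := by rw [Nat.card_Icc]; omega
  have h2 : (∑ t ∈ Finset.range n, (if M < t ∧ σ t = mfun k M n Alg t then 1 else 0)) ≤
      T / k + 1 := by
    rw [← Finset.card_filter]
    calc ((Finset.range n).filter (fun t => M < t ∧ σ t = mfun k M n Alg t)).card
        ≤ ((Finset.Ico M (M + T)).filter
            (fun t => sig k M n Alg t = mfun k M n Alg t)).card := by
          apply Finset.card_le_card
          intro t ht
          rw [Finset.mem_filter, Finset.mem_range] at ht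
          rw [Finset.mem_filter, Finset.mem_Ico]
          exact ⟨⟨by omega, by omega⟩, ht.2.2⟩
      _ ≤ T / k + 1 := hits_card hk
  omega

lemma opt_upper {k M T : ℕ} {Alg : List (ℕ × ℕ) → Finset ℕ} (hAlg : DetAlgorithm k Alg)
    (hk : 1 ≤ k) (hM : 1 ≤ M) :
    optCost k (M + T) (sig k M (M + T) Alg) ≤ M + (T / k + 1) := by
  have h1 : optCost k (M + T) (sig k M (M + T) Alg) ≤
      schedCost (M + T) (sig k M (M + T) Alg) (Copt k M (M + T) Alg) :=
    Nat.sInf_le ⟨_, Copt_schedule hAlg hk hM, rfl⟩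
  exact h1.trans (Copt_cost hAlg hk hM)

end DLB

namespace DLB

lemma Aprime_bound {k M T : ℕ} {Alg : List (ℕ × ℕ) → Finset ℕ} (hAlg : DetAlgorithm k Alg) :
    (∑ t ∈ Finset.range (M + T - 1),
      (((h0 M (M + T) t : ℤ)) - (yf (M + T) (sig k M (M + T) Alg) t : ℤ)).natAbs)
      ≤ (6 * k + 4) * T := by
  calc (∑ t ∈ Finset.range (M + T - 1),
        (((h0 M (M + T) t : ℤ)) - (yf (M + T) (sig k M (M + T) Alg) t : ℤ)).natAbs)
      ≤ ∑ t ∈ Finset.range (M + T - 1), (if t < M then 0 else (6 * k + 4)) := by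
        apply Finset.sum_le_sum
        intro t ht
        rw [Finset.mem_range] at ht
        by_cases htM : t < M
        · rw [if_pos htM]
          rw [h0, if_pos htM, yf_calm hAlg htM]
          simp
        · push_neg at htM
          rw [if_neg (by omega)]
          obtain ⟨hy1, hy2⟩ := yf_adv hAlg (T := T) htM (by omega)
          rw [h0, if_neg (by omega)]
          omega
    _ ≤ (6 * k + 4) * T := by
        rw [Finset.sum_ite]
        simp only [Finset.sum_const_zero, Finset.sum_const, smul_eq_mul, zero_add]
        have hsub : (Finset.range (M + T - 1)).filter (fun t => ¬ t < M) ⊆ Finset.Ico M (M + T) := by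
          intro t ht
          rw [Finset.mem_filter, Finset.mem_range] at ht
          rw [Finset.mem_Ico]
          omega
        have := Finset.card_le_card hsub
        rw [Nat.card_Ico] at this
        have h2 : M + T - M = T := by omega
        rw [h2] at this
        calc _ ≤ T * (6 * k + 4) := by
              apply Nat.mul_le_mul_right
              exact this
          _ = (6 * k + 4) * T := Nat.mul_comm _ _

lemma l1_val (m : ℕ) (g y : ℕ → ℕ) (E : ℕ)
    (hA : (∑ t ∈ Finset.range m, ((g t : ℤ) - (y t : ℤ)).natAbs) ≤ E) :
    l1Error (m + 1)
      (fun i => if i = m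
        then y m + (E - (∑ t ∈ Finset.range m, ((g t : ℤ) - (y t : ℤ)).natAbs))
        else g i) y = E := by
  set A := ∑ t ∈ Finset.range m, ((g t : ℤ) - (y t : ℤ)).natAbs with hAdef
  rw [l1Error, Finset.sum_range_succ]
  have h1 : (∑ t ∈ Finset.range m,
      ((((fun i => if i = m then y m + (E - A) else g i) t : ℕ) : ℤ) - (y t : ℤ)).natAbs) = A := by
    rw [hAdef]
    apply Finset.sum_congr rfl
    intro t ht
    rw [Finset.mem_range] at ht
    simp only [if_neg (by omega : ¬ t = m)]
  rw [h1]
  simp only [eq_self_iff_true, if_true]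
  omega

end DLB

namespace DLB

lemma delta_arith {kR o e r δ : ℝ} (hk : 2 ≤ kR) (hδ : 0 < δ) (hr : 0 ≤ r)
    (he1 : r * kR * o ≤ e) (he2 : e < r * kR * o + 1)
    (hOδ : 1/δ + 1 ≤ o) (ho : 1 ≤ o) :
    |e / (kR * o) - r| < δ := by
  have hkO : (0:ℝ) < kR * o := by nlinarith
  have hδO : 1 < δ * (kR * o) := by
    have h1 : δ * (1/δ + 1) ≤ δ * o := by nlinarith
    have h2 : δ * (1/δ + 1) = 1 + δ := by field_simp
    nlinarith
  rw [abs_sub_lt_iff]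
  constructor
  · rw [sub_lt_iff_lt_add, div_lt_iff₀ hkO]
    nlinarith
  · have hrle : r ≤ e / (kR * o) := by
      rw [le_div_iff₀ hkO]
      nlinarith
    linarith

lemma main_arith {kR o e a m t r : ℝ} (hk : 2 ≤ kR) (hr : 0 < r) (hrk : r ≤ kR)
    (ht39 : 39 * kR * kR ≤ t)
    (hrm : r * m ≤ 13 * t + kR * kR + kR)
    (hou : o ≤ m + t / kR + 1)
    (hal : m + t ≤ a + kR + t / 3 + 1)
    (he2 : e < r * kR * o + 1) (he0 : 0 ≤ e) (ho : 1 ≤ o) (ht : 0 ≤ t) (hm : 0 ≤ m) :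
    o + (1/168) * e / kR ≤ a := by
  have hkpos : (0:ℝ) < kR := by linarith
  have htk2 : t / kR ≤ t / 2 := by
    apply div_le_div_of_nonneg_left ht (by norm_num) hk
  have hou2 : o ≤ m + t/2 + 1 := by linarith
  have hrO : r * o ≤ 14 * t + kR * kR + 2 * kR := by
    have h1 : r * o ≤ r * (m + t / kR + 1) := by nlinarith
    have h2 : r * (t / kR) ≤ kR * (t / kR) := by
      apply mul_le_mul_of_nonneg_right hrk (by positivity)
    have h3 : kR * (t / kR) = t := by field_simp
    nlinarith
  have hek : e / kR ≤ r * o + 1 := by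
    rw [div_le_iff₀ hkpos]
    nlinarith
  have hgoal : (1:ℝ)/168 * e / kR = (1/168) * (e / kR) := by ring
  rw [hgoal]
  nlinarith [sq_nonneg (kR - 2)]


lemma key_h (k M T : ℕ) (Alg : List (ℕ × ℕ) → Finset ℕ) (hM : 1 ≤ M) (E : ℕ)
    (hA : (∑ t ∈ Finset.range (M + T - 1),
      ((h0 M (M + T) t : ℤ) - (yf (M + T) (sig k M (M + T) Alg) t : ℤ)).natAbs) ≤ E) :
    ∃ h : ℕ → ℕ, l1Error (M + T) h (yf (M + T) (sig k M (M + T) Alg)) = E ∧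
      (∀ i, i < M + T - 1 → h i = h0 M (M + T) i) := by
  obtain ⟨m, hm⟩ : ∃ m, M + T = m + 1 := ⟨M + T - 1, by omega⟩
  have hm' : M + T - 1 = m := by omega
  rw [hm'] at hA
  rw [hm', hm]
  rw [hm] at hA
  exact ⟨_, l1_val m (h0 M (m + 1)) (yf (m + 1) (sig k M (m + 1) Alg)) E hA,
    fun i hi => if_neg (by omega)⟩

set_option maxHeartbeats 2000000 in
lemma case_pos {k : ℕ} (hk : 2 ≤ k) {Alg : List (ℕ × ℕ) → Finset ℕ}
    (hAlg : DetAlgorithm k Alg)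
    {r δ : ℝ} (hr : 0 < r) (hrk : r ≤ k) (hδ : 0 < δ) (N : ℕ) :
    ∃ (n : ℕ) (σ h y : ℕ → ℕ),
      (∀ t < n, IsLeast {t' | (t < t' ∧ t' < n ∧ σ t' = σ t) ∨ t' = n + 1} (y t)) ∧
      N ≤ optCost k n σ ∧ 0 < optCost k n σ ∧
      |(l1Error n h y : ℝ) / ((k : ℝ) * optCost k n σ) - r| < δ ∧
      (optCost k n σ : ℝ) + (1/168) * (l1Error n h y : ℝ) / k ≤ algCost Alg σ h n := by
  have hk1 : 1 ≤ k := by omega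
  have hkR : (2:ℝ) ≤ (k:ℝ) := by exact_mod_cast hk
  have hkpos : (0:ℝ) < k := by linarith
  obtain ⟨M₀, hM₀def⟩ : ∃ m : ℕ, m = N + k + 1 + ⌈1/δ⌉₊ := ⟨_, rfl⟩
  obtain ⟨T, hTdef⟩ : ∃ m : ℕ, m = 39 * k * k + ⌈r * (M₀ : ℝ)⌉₊ := ⟨_, rfl⟩
  obtain ⟨M, hMdef⟩ : ∃ m : ℕ, m = M₀ + k + ⌈12 * (T : ℝ) / r⌉₊ := ⟨_, rfl⟩
  have hM1 : 1 ≤ M := by omega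
  -- basic cost facts (ℕ)
  have optl : M ≤ optCost k (M + T) (sig k M (M + T) Alg) + k := opt_lower hAlg
  have optu : optCost k (M + T) (sig k M (M + T) Alg) ≤ M + (T / k + 1) :=
    opt_upper hAlg hk1 hM1
  have aprime := Aprime_bound (M := M) (T := T) hAlg
  obtain ⟨OPT, hOPTdef⟩ : ∃ O, optCost k (M + T) (sig k M (M + T) Alg) = O := ⟨_, rfl⟩
  rw [hOPTdef] at optl optu
  obtain ⟨E, hEdef⟩ : ∃ e : ℕ, e = ⌈r * k * (OPT : ℝ)⌉₊ := ⟨_, rfl⟩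
  -- real versions
  have hTR : (39:ℝ) * k * k ≤ T ∧ r * M₀ ≤ (T:ℝ) := by
    have h1 : (T:ℝ) = 39 * k * k + (⌈r * (M₀ : ℝ)⌉₊ : ℝ) := by
      rw [hTdef]; push_cast; ring
    have h2 : r * M₀ ≤ (⌈r * (M₀ : ℝ)⌉₊ : ℝ) := Nat.le_ceil _
    have h3 : (0:ℝ) ≤ (⌈r * (M₀ : ℝ)⌉₊ : ℝ) := by positivity
    constructor <;> nlinarith
  have hTpos : (0:ℝ) ≤ T := by positivity
  have hMR : (M:ℝ) = M₀ + k + (⌈12 * (T : ℝ) / r⌉₊ : ℝ) := by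
    rw [hMdef]; push_cast; ring
  have hc12a : 12 * (T:ℝ) / r ≤ (⌈12 * (T : ℝ) / r⌉₊ : ℝ) := Nat.le_ceil _
  have hc12b : (⌈12 * (T : ℝ) / r⌉₊ : ℝ) < 12 * T / r + 1 :=
    Nat.ceil_lt_add_one (by positivity)
  have hOl : (M:ℝ) - k ≤ OPT := by
    have : (M:ℝ) ≤ (OPT:ℝ) + k := by exact_mod_cast optl
    linarith
  have hOu : (OPT:ℝ) ≤ M + (T:ℝ)/k + 1 := by
    have h1 : (OPT:ℝ) ≤ M + ((T/k : ℕ) : ℝ) + 1 := by exact_mod_cast optu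
    have h2 : ((T/k : ℕ) : ℝ) ≤ (T:ℝ)/k := Nat.cast_div_le
    linarith
  have hOpos : (1:ℝ) ≤ OPT := by
    have : 1 ≤ OPT := by omega
    exact_mod_cast this
  have hE1 : r * k * (OPT:ℝ) ≤ E := by rw [hEdef]; exact Nat.le_ceil _
  have hE2 : (E:ℝ) < r * k * (OPT:ℝ) + 1 := by
    rw [hEdef]
    exact Nat.ceil_lt_add_one (by positivity)
  -- A' ≤ E
  have hAE : (∑ t ∈ Finset.range (M + T - 1),
      ((h0 M (M + T) t : ℤ) - (yf (M + T) (sig k M (M + T) Alg) t : ℤ)).natAbs) ≤ E := by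
    have h1 : ((∑ t ∈ Finset.range (M + T - 1),
        ((h0 M (M + T) t : ℤ) - (yf (M + T) (sig k M (M + T) Alg) t : ℤ)).natAbs : ℕ) : ℝ)
        ≤ ((6 * k + 4) * T : ℕ) := by exact_mod_cast aprime
    have h2 : (((6 * k + 4) * T : ℕ) : ℝ) = (6 * (k:ℝ) + 4) * T := by push_cast; ring
    have h3 : (M:ℝ) - k ≥ 12 * T / r := by
      have : (0:ℝ) ≤ M₀ := by positivity
      linarith [hMR, hc12a]
    have h4 : r * k * ((M:ℝ) - k) ≥ r * k * (12 * T / r) := by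
      apply mul_le_mul_of_nonneg_left h3 (by positivity)
    have h5 : r * k * (12 * (T:ℝ) / r) = 12 * k * T := by
      field_simp
    have h6 : r * k * ((M:ℝ) - k) ≤ r * k * OPT := by
      apply mul_le_mul_of_nonneg_left hOl (by positivity)
    have h7 : (6 * (k:ℝ) + 4) * T ≤ 12 * k * T := by nlinarith
    have : ((∑ t ∈ Finset.range (M + T - 1),
        ((h0 M (M + T) t : ℤ) - (yf (M + T) (sig k M (M + T) Alg) t : ℤ)).natAbs : ℕ) : ℝ)
        ≤ (E : ℝ) := by linarith
    exact_mod_cast this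
  obtain ⟨h, hl1, hagree⟩ := key_h k M T Alg hM1 E hAE
  clear aprime hAE
  have alg : M + T ≤ algCost Alg (sig k M (M + T) Alg) h (M + T) + k + (T / 3 + 1) :=
    alg_lower hAlg hagree
  refine ⟨M + T, sig k M (M + T) Alg, h, yf (M + T) (sig k M (M + T) Alg),
    fun t _ => yf_isLeast _ _ t, ?_, ?_, ?_, ?_⟩
  · rw [hOPTdef]; omega
  · rw [hOPTdef]; omega
  · -- δ condition
    rw [hl1, hOPTdef]
    clear hl1 hagree alg
    have hOδ : 1/δ + 1 ≤ (OPT:ℝ) := by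
      have h1 : (⌈1/δ⌉₊ : ℕ) + 1 ≤ OPT := by omega
      have h2 : ((⌈1/δ⌉₊ : ℕ) : ℝ) + 1 ≤ (OPT:ℝ) := by exact_mod_cast h1
      have h3 : 1/δ ≤ ((⌈1/δ⌉₊ : ℕ) : ℝ) := Nat.le_ceil _
      linarith
    exact delta_arith hkR hδ (le_of_lt hr) hE1 hE2 hOδ hOpos
  · -- main inequality
    rw [hl1, hOPTdef]
    clear hl1 hagree
    obtain ⟨ALG, hALGdef⟩ : ∃ A, algCost Alg (sig k M (M + T) Alg) h (M + T) = A := ⟨_, rfl⟩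
    rw [hALGdef] at alg ⊢
    have hAl2 : (M:ℝ) + T ≤ (ALG : ℝ) + k + (T:ℝ)/3 + 1 := by
      have h1 : ((M + T : ℕ) : ℝ) ≤ ((ALG + k + (T / 3 + 1) : ℕ) : ℝ) := by exact_mod_cast alg
      have h2 : ((T/3 : ℕ) : ℝ) ≤ (T:ℝ)/3 := Nat.cast_div_le
      push_cast at h1
      linarith
    have hrM : r * M ≤ 13 * (T:ℝ) + k * k + k := by
      have h1 : r * (⌈12 * (T : ℝ) / r⌉₊ : ℝ) ≤ 12 * T + r := by
        have h2 : r * (12 * (T:ℝ) / r) = 12 * T := by field_simp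
        nlinarith [hc12b, hr]
      have h3 : r * (M₀:ℝ) ≤ T := hTR.2
      have h4 : r * k ≤ (k:ℝ) * k := by nlinarith [hrk, hkpos]
      have h5 : r * (M:ℝ) = r * M₀ + r * k + r * (⌈12 * (T : ℝ) / r⌉₊ : ℝ) := by
        rw [hMR]; ring
      nlinarith [h1, h3, h4, h5]
    exact main_arith hkR hr hrk hTR.1 hrM hOu hAl2 hE2 (by positivity) hOpos hTpos
      (by positivity)

end DLB

namespace DLB

set_option maxHeartbeats 1000000 in
lemma case_zero {k : ℕ} (hk : 2 ≤ k) {Alg : List (ℕ × ℕ) → Finset ℕ}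
    (hAlg : DetAlgorithm k Alg) {δ : ℝ} (hδ : 0 < δ) (N : ℕ) :
    ∃ (n : ℕ) (σ h y : ℕ → ℕ),
      (∀ t < n, IsLeast {t' | (t < t' ∧ t' < n ∧ σ t' = σ t) ∨ t' = n + 1} (y t)) ∧
      N ≤ optCost k n σ ∧ 0 < optCost k n σ ∧
      |(l1Error n h y : ℝ) / ((k : ℝ) * optCost k n σ) - 0| < δ ∧
      (optCost k n σ : ℝ) + (1/168) * (l1Error n h y : ℝ) / k ≤ algCost Alg σ h n := by
  obtain ⟨M, hMdef⟩ : ∃ m : ℕ, m = N + k + 1 := ⟨_, rfl⟩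
  have hM1 : 1 ≤ M := by omega
  have hA : (∑ t ∈ Finset.range (M + 0 - 1),
      ((h0 M (M + 0) t : ℤ) - (yf (M + 0) (sig k M (M + 0) Alg) t : ℤ)).natAbs) ≤ 0 := by
    have := Aprime_bound (M := M) (T := 0) hAlg
    simpa using this
  obtain ⟨h, hl1, hagree⟩ := key_h k M 0 Alg hM1 0 hA
  have optl : M ≤ optCost k (M + 0) (sig k M (M + 0) Alg) + k := opt_lower hAlg
  refine ⟨M + 0, sig k M (M + 0) Alg, h, yf (M + 0) (sig k M (M + 0) Alg),
    fun t _ => yf_isLeast _ _ t, by omega, by omega, ?_, ?_⟩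
  · rw [hl1]
    have hOpos : (0:ℝ) < (k : ℝ) * (optCost k (M + 0) (sig k M (M + 0) Alg) : ℝ) := by
      have h1 : 0 < optCost k (M + 0) (sig k M (M + 0) Alg) := by omega
      have h2 : (0:ℝ) < (optCost k (M + 0) (sig k M (M + 0) Alg) : ℝ) := by exact_mod_cast h1
      have h3 : (0:ℝ) < (k:ℝ) := by
        have : 0 < k := by omega
        exact_mod_cast this
      positivity
    rw [Nat.cast_zero, zero_div, zero_sub, abs_neg, abs_zero]
    exact hδ
  · rw [hl1, Nat.cast_zero]
    have h1 : optCost k (M + 0) (sig k M (M + 0) Alg) ≤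
        algCost Alg (sig k M (M + 0) Alg) h (M + 0) := opt_le_alg hAlg _ _
    have h2 : (optCost k (M + 0) (sig k M (M + 0) Alg) : ℝ) ≤
        (algCost Alg (sig k M (M + 0) Alg) h (M + 0) : ℝ) := by exact_mod_cast h1
    have h3 : (1:ℝ)/168 * 0 / k = 0 := by ring
    rw [h3]
    linarith

end DLB


/-- Every deterministic learning-augmented caching algorithm has
competitive ratio at least 1 + Ω(min((1/k)·(η/OPT), k)): there is a universal
constant C > 0 such that for every deterministic algorithm A, every k ≥ 2,
every target ratio r ∈ [0, k], every tolerance δ > 0 and every bound N, there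
is an input (σ, h) with η/(k·OPT) within δ of r and OPT ≥ N on which
ALG_A ≥ OPT + C·η/k. -/
theorem deterministic_lower_bound :
    ∃ C : ℝ, C > 0 ∧
      ∀ (k : ℕ), 2 ≤ k →
      ∀ (Alg : List (ℕ × ℕ) → Finset ℕ), DetAlgorithm k Alg →
      ∀ r : ℝ, 0 ≤ r → r ≤ (k : ℝ) →
      ∀ δ : ℝ, 0 < δ →
      ∀ N : ℕ,
      ∃ (n : ℕ) (σ h y : ℕ → ℕ),
        (∀ t < n,
          IsLeast {t' | (t < t' ∧ t' < n ∧ σ t' = σ t) ∨ t' = n + 1} (y t)) ∧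
        N ≤ optCost k n σ ∧ 0 < optCost k n σ ∧
        |(l1Error n h y : ℝ) / ((k : ℝ) * optCost k n σ) - r| < δ ∧
        (optCost k n σ : ℝ) + C * (l1Error n h y : ℝ) / k ≤ algCost Alg σ h n := by
  refine ⟨1/168, by norm_num, ?_⟩
  intro k hk Alg hAlg r hr0 hrk δ hδ N
  rcases eq_or_lt_of_le hr0 with hr | hr
  · obtain ⟨n, σ, h, y, h1, h2, h3, h4, h5⟩ := DLB.case_zero hk hAlg hδ N
    exact ⟨n, σ, h, y, h1, h2, h3, by rw [← hr]; exact h4, h5⟩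
  · exact DLB.case_pos hk hAlg hr hrk hδ N
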